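/- Under hypothesis (a.5), if additionally γ''' is monotone (decreasing, negative), then |γ'''(t)| ≥ (1/(2ε))·γ''(t)/t for all small t > 0. -/

import Mathlib

open Real Set

/-- under (a.5) and monotonicity of γ''' (decreasing, negative),
    |γ'''(t)| ≥ (1/(2ε))·γ''(t)/t for all small t > 0. -/
theorem stmt_1
    (γ'' γ''' : ℝ → ℝ)
    (hderiv : ∀ t ∈ Ioc (0:ℝ) 1, HasDerivAt γ'' (γ''' t) t)
    (hpos : ∀ t ∈ Ioc (0:ℝ) 1, 0 < γ'' t)
    (hanti2 : StrictAntiOn γ'' (Ioc (0:ℝ) 1))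
    (hneg3 : ∀ t ∈ Ioc (0:ℝ) 1, γ''' t < 0)
    (hanti3 : AntitoneOn (fun t => -γ''' t) (Ioc (0:ℝ) 1))
    (ε t₀ : ℝ) (hε : 0 < ε) (hε2 : (1 + ε)^2 < 2)
    (ht₀ : t₀ ∈ Ioc (0:ℝ) 1)
    (ha5 : ∀ t : ℝ, 0 < t → t < t₀ → γ'' t ≥ 2 * γ'' ((1 + ε) * t)) :
    ∃ T : ℝ, 0 < T ∧ ∀ t : ℝ, 0 < t → t < T →
      |γ''' t| ≥ (1 / (2 * ε)) * (γ'' t / t) := by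
  have h1ε : (0:ℝ) < 1 + ε := by linarith
  refine ⟨min t₀ (1 / (1 + ε)), lt_min ht₀.1 (by positivity), ?_⟩
  intro t ht htT
  have htt₀ : t < t₀ := lt_of_lt_of_le htT (min_le_left _ _)
  have htI : t ∈ Ioc (0:ℝ) 1 := ⟨ht, le_trans htt₀.le ht₀.2⟩
  set b := (1 + ε) * t with hb
  have htb : t < b := by
    rw [hb]; nlinarith
  have hb1 : b ≤ 1 := by
    have : t < 1 / (1 + ε) := lt_of_lt_of_le htT (min_le_right _ _)
    rw [hb]
    calc (1 + ε) * t ≤ (1 + ε) * (1 / (1 + ε)) := by nlinarith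
      _ = 1 := by field_simp
  have hsub : Icc t b ⊆ Ioc (0:ℝ) 1 := fun x hx => ⟨lt_of_lt_of_le ht hx.1, le_trans hx.2 hb1⟩
  -- MVT
  obtain ⟨c, hc, hceq⟩ := exists_hasDerivAt_eq_slope γ'' γ''' htb
    (fun x hx => ((hderiv x (hsub hx)).continuousAt).continuousWithinAt)
    (fun x hx => hderiv x (hsub ⟨hx.1.le, hx.2.le⟩))
  have hcI : c ∈ Ioc (0:ℝ) 1 := hsub ⟨hc.1.le, hc.2.le⟩
  have hmono : -γ''' c ≤ -γ''' t := hanti3 htI hcI hc.1.le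
  have hba : b - t = ε * t := by rw [hb]; ring
  have ha5t := ha5 t ht htt₀
  have hεt : (0:ℝ) < ε * t := by positivity
  have hslope : γ''' c = (γ'' b - γ'' t) / (ε * t) := by rw [← hba]; exact hceq
  have key : -γ''' t * (ε * t) ≥ γ'' t / 2 := by
    have h1 : -γ''' c * (ε * t) = γ'' t - γ'' b := by
      rw [hslope]; field_simp; ring
    nlinarith [hpos t htI]
  have hγt : γ''' t < 0 := hneg3 t htI
  have heq : 1 / (2 * ε) * (γ'' t / t) = γ'' t / (2 * ε * t) := by
    field_simp
  rw [abs_of_neg hγt, ge_iff_le, heq,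
    div_le_iff₀ (by positivity : (0:ℝ) < 2 * ε * t)]
  nlinarith
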